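/- Robbins–Siegmund theorem for nonnegative almost supermartingales: let {ℱₜ} be a filtration and Vₜ, Uₜ, Wₜ nonnegative real-valued integrable adapted processes such that for all t, E[V_{t+1} | ℱₜ] ≤ Vₜ − Uₜ + Wₜ almost surely. Then with probability one, either ∑ₜ Uₜ < ∞ or ∑ₜ Wₜ = ∞. -/

import Mathlib

open MeasureTheory Finset Filter
open scoped ENNReal Topology

lemma rs_filter_range_eq {P : ℕ → Prop} [DecidablePred P]
    (hP : ∀ s t, s ≤ t → P t → P s) (n : ℕ) :
    (Finset.range n).filter P = Finset.range (((Finset.range n).filter P).card) := by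
  induction n with
  | zero => simp
  | succ n ih =>
    by_cases h : P n
    · have hall : (Finset.range (n+1)).filter P = Finset.range (n+1) :=
        Finset.filter_true_of_mem fun x hx =>
          hP x n (Nat.lt_succ_iff.mp (Finset.mem_range.mp hx)) h
      rw [hall, Finset.card_range]
    · have hstep : (Finset.range (n+1)).filter P = (Finset.range n).filter P := by
        rw [Finset.range_add_one, Finset.filter_insert, if_neg h]
      rw [hstep, ← ih]

lemma rs_card_min {P : ℕ → Prop} [DecidablePred P]
    (hP : ∀ s t, s ≤ t → P t → P s) {t n : ℕ} (htn : t ≤ n) :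
    min t (((Finset.range n).filter P).card) = ((Finset.range t).filter P).card := by
  set ct := ((Finset.range t).filter P).card with hct
  set cn := ((Finset.range n).filter P).card with hcn
  have hmono : ct ≤ cn :=
    Finset.card_le_card (Finset.filter_subset_filter _ (Finset.range_subset_range.2 htn))
  have hle : ct ≤ t := (Finset.card_filter_le _ _).trans_eq (Finset.card_range t)
  rcases eq_or_lt_of_le hle with heq | hlt
  · rw [heq]; exact min_eq_left (heq ▸ hmono)
  · have hnot : ¬ P ct := by
      intro hp
      have : ct ∈ (Finset.range t).filter P := Finset.mem_filter.2 ⟨Finset.mem_range.2 hlt, hp⟩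
      rw [rs_filter_range_eq hP t] at this
      exact absurd (Finset.mem_range.mp this) (lt_irrefl _)
    have hcn_le : cn ≤ ct := by
      by_contra hcon
      push_neg at hcon
      have : ct ∈ (Finset.range n).filter P := by
        rw [rs_filter_range_eq hP n]; exact Finset.mem_range.2 hcon
      exact hnot (Finset.mem_filter.mp this).2
    rw [min_eq_right (hcn_le.trans hlt.le)]
    exact le_antisymm hcn_le hmono

lemma rs_card_le_iff {P : ℕ → Prop} [DecidablePred P]
    (hP : ∀ s t, s ≤ t → P t → P s) {n i : ℕ} :
    ((Finset.range n).filter P).card ≤ i ↔ n ≤ i ∨ ¬ P i := by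
  constructor
  · intro h
    by_cases hni : n ≤ i
    · exact Or.inl hni
    · right
      intro hPi
      push_neg at hni
      have hsub : Finset.range (i+1) ⊆ (Finset.range n).filter P := by
        intro s hs
        have hsi := Nat.lt_succ_iff.mp (Finset.mem_range.mp hs)
        exact Finset.mem_filter.2 ⟨Finset.mem_range.2 (lt_of_le_of_lt hsi hni), hP s i hsi hPi⟩
      have := Finset.card_le_card hsub
      rw [Finset.card_range] at this
      omega
  · rintro (hni | hPi)
    · exact ((Finset.card_filter_le _ _).trans_eq (Finset.card_range n)).trans hni
    · by_contra hcon
      push_neg at hcon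
      have : i ∈ (Finset.range n).filter P := by
        rw [rs_filter_range_eq hP n]; exact Finset.mem_range.2 hcon
      exact hPi (Finset.mem_filter.mp this).2

/-- Robbins–Siegmund convergence theorem for nonnegative almost supermartingales. -/
theorem robbins_siegmund {Ω : Type*} {m0 : MeasurableSpace Ω}
    (μ : Measure Ω) [IsProbabilityMeasure μ] (ℱ : Filtration ℕ m0)
    (V U W : ℕ → Ω → ℝ)
    (hVnn : ∀ t ω, 0 ≤ V t ω) (hUnn : ∀ t ω, 0 ≤ U t ω) (hWnn : ∀ t ω, 0 ≤ W t ω)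
    (hVadp : Adapted ℱ V) (hUadp : Adapted ℱ U) (hWadp : Adapted ℱ W)
    (hVint : ∀ t, Integrable (V t) μ) (hUint : ∀ t, Integrable (U t) μ)
    (hWint : ∀ t, Integrable (W t) μ)
    (hdrift : ∀ t, ∀ᵐ ω ∂μ, (μ[V (t + 1) | ℱ t]) ω ≤ V t ω - U t ω + W t ω) :
    μ {ω | (∑' t, ENNReal.ofReal (U t ω)) < ⊤ ∨
           (∑' t, ENNReal.ofReal (W t ω)) = ⊤} = 1 := by
  classical
  set S : ℕ → Ω → ℝ := fun t ω => ∑ s ∈ Finset.range t, U s ω with hSdef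
  set T : ℕ → Ω → ℝ := fun t ω => ∑ s ∈ Finset.range t, W s ω with hTdef
  set X : ℕ → Ω → ℝ := fun t ω => V t ω + S t ω - T t ω with hXdef
  have hSnn : ∀ t ω, 0 ≤ S t ω := fun t ω => Finset.sum_nonneg fun s _ => hUnn s ω
  have hTnn : ∀ t ω, 0 ≤ T t ω := fun t ω => Finset.sum_nonneg fun s _ => hWnn s ω
  have hTmono : ∀ (ω : Ω) {s t : ℕ}, s ≤ t → T s ω ≤ T t ω := fun ω s t hst =>
    Finset.sum_le_sum_of_subset_of_nonneg (Finset.range_subset_range.2 hst)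
      (fun i _ _ => hWnn i ω)
  have hSmeas : ∀ n t, n ≤ t + 1 → StronglyMeasurable[ℱ t] (S n) := fun n t h =>
    Finset.stronglyMeasurable_fun_sum _ fun s hs =>
      ((hUadp s).mono (ℱ.mono (by have := Finset.mem_range.mp hs; omega)) le_rfl).stronglyMeasurable
  have hTmeas : ∀ n t, n ≤ t + 1 → StronglyMeasurable[ℱ t] (T n) := fun n t h =>
    Finset.stronglyMeasurable_fun_sum _ fun s hs =>
      ((hWadp s).mono (ℱ.mono (by have := Finset.mem_range.mp hs; omega)) le_rfl).stronglyMeasurable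
  have hSint : ∀ n, Integrable (S n) μ := fun n => integrable_finset_sum _ fun s _ => hUint s
  have hTint : ∀ n, Integrable (T n) μ := fun n => integrable_finset_sum _ fun s _ => hWint s
  have hXadp : StronglyAdapted ℱ X := fun t =>
    ((hVadp t).stronglyMeasurable.add (hSmeas t t (by omega))).sub (hTmeas t t (by omega))
  have hXint : ∀ t, Integrable (X t) μ := fun t => (((hVint t).add (hSint t)).sub (hTint t))
  have hXsup : Supermartingale X ℱ μ := by
    refine supermartingale_nat hXadp hXint fun t => ?_
    have hg_sm : StronglyMeasurable[ℱ t] (fun ω => S (t+1) ω - T (t+1) ω) :=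
      (hSmeas (t+1) t le_rfl).sub (hTmeas (t+1) t le_rfl)
    have hg_int : Integrable (fun ω => S (t+1) ω - T (t+1) ω) μ :=
      (hSint (t+1)).sub (hTint (t+1))
    have hXeq : X (t+1) = V (t+1) + fun ω => S (t+1) ω - T (t+1) ω := by
      funext ω; simp only [hXdef, Pi.add_apply]; ring
    have h1 : μ[X (t+1)|ℱ t] =ᵐ[μ]
        μ[V (t+1)|ℱ t] + μ[fun ω => S (t+1) ω - T (t+1) ω|ℱ t] := by
      rw [hXeq]; exact condExp_add (hVint (t+1)) hg_int _
    have h2 : μ[fun ω => S (t+1) ω - T (t+1) ω|ℱ t] = fun ω => S (t+1) ω - T (t+1) ω :=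
      condExp_of_stronglyMeasurable (ℱ.le t) hg_sm hg_int
    filter_upwards [h1, hdrift t] with ω h1ω hdω
    have hSsucc : S (t+1) ω = S t ω + U t ω := Finset.sum_range_succ _ _
    have hTsucc : T (t+1) ω = T t ω + W t ω := Finset.sum_range_succ _ _
    have heval : (μ[X (t+1)|ℱ t]) ω = (μ[V (t+1)|ℱ t]) ω + (S (t+1) ω - T (t+1) ω) := by
      rw [h1ω, Pi.add_apply, h2]
    rw [heval]
    have hXt : X t ω = V t ω + S t ω - T t ω := rfl
    rw [hXt, hSsucc, hTsucc]
    linarith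
  -- key per-level lemma
  have key : ∀ k : ℕ, ∀ᵐ ω ∂μ,
      (∀ t, T (t+1) ω ≤ (k : ℝ)) → (∑' t, ENNReal.ofReal (U t ω)) < ⊤ := by
    intro k
    set a : ℝ := (k : ℝ) with ha
    have hann : (0:ℝ) ≤ a := Nat.cast_nonneg k
    set P : Ω → ℕ → Prop := fun ω t => T (t+1) ω ≤ a with hPdef
    have hPdc : ∀ ω, ∀ s t, s ≤ t → P ω t → P ω s := fun ω s t hst h =>
      le_trans (hTmono ω (by omega)) h
    set c : ℕ → Ω → ℕ := fun n ω => ((Finset.range n).filter (P ω)).card with hcdef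
    have hc_le : ∀ n ω, c n ω ≤ n := fun n ω =>
      (Finset.card_filter_le _ _).trans_eq (Finset.card_range n)
    have hcmin : ∀ {t n : ℕ} (ω : Ω), t ≤ n → min t (c n ω) = c t ω := fun {t n} ω h =>
      rs_card_min (hPdc ω) h
    have hst : ∀ n, IsStoppingTime ℱ (fun ω => c n ω) := by
      intro n i
      have hset : {ω | c n ω ≤ i} = if n ≤ i then Set.univ else {ω | a < T (i+1) ω} := by
        ext ω
        by_cases hni : n ≤ i
        · simp only [if_pos hni, Set.mem_univ, iff_true, Set.mem_setOf_eq]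
          exact (rs_card_le_iff (hPdc ω)).2 (Or.inl hni)
        · simp only [if_neg hni, Set.mem_setOf_eq]
          rw [rs_card_le_iff (hPdc ω)]
          constructor
          · intro h
            have := h.resolve_left hni
            simpa [hPdef, not_le] using this
          · intro h
            exact Or.inr (by simpa [hPdef, not_le] using h)
      have hcoe : {ω | ((c n ω : ℕ) : WithTop ℕ) ≤ (i : WithTop ℕ)} = {ω | c n ω ≤ i} := by
        ext; simp
      show MeasurableSet[ℱ i] {ω | ((c n ω : ℕ) : WithTop ℕ) ≤ (i : WithTop ℕ)}
      rw [hcoe, hset]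
      split_ifs
      · exact MeasurableSet.univ
      · exact measurableSet_lt measurable_const (hTmeas (i+1) i le_rfl).measurable
    set Y : ℕ → Ω → ℝ := fun t ω => X (c t ω) ω with hYdef
    have hYeq : ∀ {t n : ℕ}, t ≤ n →
        MeasureTheory.stoppedProcess X (fun ω => c n ω) t = Y t := by
      intro t n h
      funext ω
      simp only [MeasureTheory.stoppedProcess, hYdef]
      show X (min t (c n ω)) ω = _
      rw [hcmin ω h]
    have hSPsup : ∀ n, Supermartingale (MeasureTheory.stoppedProcess X (fun ω => c n ω)) ℱ μ := by
      intro n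
      have h := (hXsup.neg.stoppedProcess (hst n)).neg
      rwa [show MeasureTheory.stoppedProcess (-X) (fun ω => c n ω)
          = -(MeasureTheory.stoppedProcess X (fun ω => c n ω)) from rfl, neg_neg] at h
    have hYsup : Supermartingale Y ℱ μ := by
      refine supermartingale_nat (fun t => ?_) (fun t => ?_) (fun t => ?_)
      · rw [← hYeq (le_refl t)]; exact (hSPsup t).1 t
      · rw [← hYeq (le_refl t)]; exact (hSPsup t).2.2 t
      · have h := (hSPsup (t+1)).2.1 t (t+1) (Nat.le_succ t)
        rwa [hYeq (le_refl (t+1)), hYeq (Nat.le_succ t)] at h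
    have hTc : ∀ t ω, T (c t ω) ω ≤ a := by
      intro t ω
      rcases Nat.eq_zero_or_pos (c t ω) with h0 | hpos
      · rw [h0]
        simpa [hTdef] using hann
      · obtain ⟨m, hm⟩ : ∃ m, c t ω = m + 1 := ⟨c t ω - 1, by omega⟩
        have hmlt : m < c t ω := by omega
        have hmem : m ∈ (Finset.range t).filter (P ω) := by
          rw [rs_filter_range_eq (hPdc ω) t]
          refine Finset.mem_range.2 ?_
          simpa [hcdef] using hmlt
        have hPm : P ω m := (Finset.mem_filter.mp hmem).2
        rw [hm]
        exact hPm
    have hYlb : ∀ t ω, -a ≤ Y t ω := by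
      intro t ω
      have hYX : Y t ω = V (c t ω) ω + S (c t ω) ω - T (c t ω) ω := rfl
      have h1 := hVnn (c t ω) ω
      have h2 := hSnn (c t ω) ω
      have h3 := hTc t ω
      rw [hYX]; linarith
    set B : ℝ := ∫ ω, Y 0 ω ∂μ + 2 * a with hBdef
    have hbdd : ∀ n, eLpNorm ((-Y) n) 1 μ ≤ B.toNNReal := by
      intro n
      rw [show (-Y) n = -(Y n) from rfl, eLpNorm_neg, eLpNorm_one_eq_lintegral_enorm,
        ← ofReal_integral_norm_eq_lintegral_enorm (hYsup.2.2 n)]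
      rw [show ((B.toNNReal : ℝ≥0∞)) = ENNReal.ofReal B from rfl]
      refine ENNReal.ofReal_le_ofReal ?_
      have hpt : ∀ ω, ‖Y n ω‖ ≤ Y n ω + 2 * a := by
        intro ω
        have := hYlb n ω
        rw [Real.norm_eq_abs]
        refine abs_le.2 ⟨by linarith, by linarith⟩
      have hint : ∫ ω, ‖Y n ω‖ ∂μ ≤ ∫ ω, (Y n ω + 2*a) ∂μ :=
        integral_mono (hYsup.2.2 n).norm ((hYsup.2.2 n).add (integrable_const _)) hpt
      have h2 : ∫ ω, (Y n ω + 2*a) ∂μ = ∫ ω, Y n ω ∂μ + 2*a := by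
        rw [integral_add (hYsup.2.2 n) (integrable_const _), integral_const, probReal_univ,
          one_smul]
      have h3 : ∫ ω, Y n ω ∂μ ≤ ∫ ω, Y 0 ω ∂μ := by
        have := hYsup.setIntegral_le (Nat.zero_le n) (MeasurableSet.univ (α := Ω))
        simpa [Measure.restrict_univ] using this
      rw [hBdef]
      linarith
    have hconv := hYsup.neg.ae_tendsto_limitProcess hbdd
    filter_upwards [hconv] with ω hω hTb
    have hceq : ∀ t, c t ω = t := by
      intro t
      simp only [hcdef]
      rw [Finset.filter_true_of_mem, Finset.card_range]
      intro s hs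
      exact hTb s
    have hYX : ∀ t, Y t ω = X t ω := fun t => by
      simp only [hYdef, hceq]
    have htend : Tendsto (fun n => Y n ω) atTop (𝓝 (-(ℱ.limitProcess (-Y) μ ω))) := by
      have := hω.neg
      simpa using this
    have hbd : BddAbove (Set.range fun n => Y n ω) := htend.bddAbove_range
    obtain ⟨C, hC⟩ := hbd
    have hYC : ∀ n, Y n ω ≤ C := fun n => hC (Set.mem_range_self n)
    have hTle : ∀ t, T t ω ≤ a := by
      intro t
      cases t with
      | zero => simpa [hTdef] using hann
      | succ m => exact hTb m
    have hSle : ∀ t, S t ω ≤ C + a := by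
      intro t
      have hXeq : X t ω = V t ω + S t ω - T t ω := rfl
      have h1 := hYC t
      rw [hYX t, hXeq] at h1
      have h2 := hVnn t ω
      have h3 := hTle t
      linarith
    rw [ENNReal.tsum_eq_iSup_nat]
    refine lt_of_le_of_lt (iSup_le fun n => ?_) (ENNReal.ofReal_lt_top (r := C + a))
    rw [← ENNReal.ofReal_sum_of_nonneg fun s _ => hUnn s ω]
    exact ENNReal.ofReal_le_ofReal (hSle n)
  -- combine
  have hmain : ∀ᵐ ω ∂μ, (∑' t, ENNReal.ofReal (U t ω)) < ⊤ ∨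
      (∑' t, ENNReal.ofReal (W t ω)) = ⊤ := by
    filter_upwards [ae_all_iff.2 key] with ω hω
    by_cases hW : (∑' t, ENNReal.ofReal (W t ω)) = ⊤
    · exact Or.inr hW
    · left
      refine hω ⌈(∑' t, ENNReal.ofReal (W t ω)).toReal⌉₊ fun t => ?_
      have h1 : ENNReal.ofReal (T (t+1) ω) = ∑ s ∈ Finset.range (t+1), ENNReal.ofReal (W s ω) :=
        ENNReal.ofReal_sum_of_nonneg fun s _ => hWnn s ω
      have h2 : ENNReal.ofReal (T (t+1) ω) ≤ ∑' s, ENNReal.ofReal (W s ω) := by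
        rw [h1]; exact ENNReal.sum_le_tsum _
      have h3 : T (t+1) ω ≤ (∑' s, ENNReal.ofReal (W s ω)).toReal := by
        rw [← ENNReal.toReal_ofReal (hTnn (t+1) ω)]
        exact ENNReal.toReal_mono hW h2
      exact h3.trans (Nat.le_ceil _)
  have hcompl : μ {ω | ¬ ((∑' t, ENNReal.ofReal (U t ω)) < ⊤ ∨
      (∑' t, ENNReal.ofReal (W t ω)) = ⊤)} = 0 := ae_iff.mp hmain
  calc μ {ω | (∑' t, ENNReal.ofReal (U t ω)) < ⊤ ∨ (∑' t, ENNReal.ofReal (W t ω)) = ⊤}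
      = μ Set.univ := measure_congr (MeasureTheory.ae_eq_univ.2 (by rwa [Set.compl_setOf]))
    _ = 1 := measure_univ
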